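/- Let 0 < γ ≤ 1 and let a = (a_k)_{k≥0}, b = (b_k)_{k≥0} be strictly increasing sequences of positive integers with a_0 = b_0 = 1, a_j − a_i ≤ b_j − b_i whenever i ≤ j, a_k/b_k → 0 and b_k/a_{k+1} → 0 as k → ∞. Then the Hausdorff dimension of F(γ,a,b) is 0. -/

import Mathlib

open Filter MeasureTheory Metric Set ENNReal Classical
open scoped Topology

noncomputable section

/-- `coverNumber δ A` is the smallest number of sets of diameter at most `δ`
needed to cover `A`. -/
noncomputable def coverNumber {X : Type*} [MetricSpace X] (δ : ℝ) (A : Set X) : ℕ :=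
  sInf {n : ℕ | ∃ f : Fin n → Set X, A ⊆ ⋃ i, f i ∧ ∀ i, Metric.diam (f i) ≤ δ}

/-- Lower box dimension. -/
noncomputable def lowerBoxDim {X : Type*} [MetricSpace X] (A : Set X) : ℝ :=
  Filter.liminf (fun δ : ℝ => Real.log (coverNumber δ A : ℝ) / (-Real.log δ)) (𝓝[>] (0:ℝ))

/-- Upper box dimension. -/
noncomputable def upperBoxDim {X : Type*} [MetricSpace X] (A : Set X) : ℝ :=
  Filter.limsup (fun δ : ℝ => Real.log (coverNumber δ A : ℝ) / (-Real.log δ)) (𝓝[>] (0:ℝ))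

/-- Lower modified box dimension: the infimum over countable covers of `A` by bounded
sets of the supremum of the lower box dimensions of the pieces. -/
noncomputable def lowerMBDim {X : Type*} [MetricSpace X] (A : Set X) : ℝ :=
  sInf {d : ℝ | ∃ E : ℕ → Set X, A ⊆ ⋃ i, E i ∧
    ∀ i, Bornology.IsBounded (E i) ∧ lowerBoxDim (E i) ≤ d}

/-- The packing pre-premeasure at scale `δ`: supremum of `Σ (2 rᵢ)^α` over countable
families of pairwise disjoint closed balls centred in `A` with radii in `(0, δ]`. -/
noncomputable def packingPreAt {X : Type*} [MetricSpace X] (α δ : ℝ) (A : Set X) : ℝ≥0∞ :=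
  ⨆ (t : Set ℕ) (x : ℕ → X) (r : ℕ → ℝ)
    (_ : ∀ i ∈ t, x i ∈ A ∧ 0 < r i ∧ r i ≤ δ)
    (_ : t.PairwiseDisjoint fun i => Metric.closedBall (x i) (r i)),
    ∑' i : t, ENNReal.ofReal ((2 * r (i : ℕ)) ^ α)

/-- The `α`-dimensional packing premeasure. -/
noncomputable def packingPre {X : Type*} [MetricSpace X] (α : ℝ) (A : Set X) : ℝ≥0∞ :=
  ⨅ (δ : ℝ) (_ : 0 < δ), packingPreAt α δ A

/-- The `α`-dimensional packing measure. -/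
noncomputable def packingMeasure {X : Type*} [MetricSpace X] (α : ℝ) (A : Set X) : ℝ≥0∞ :=
  ⨅ (E : ℕ → Set X) (_ : A ⊆ ⋃ i, E i), ∑' i, packingPre α (E i)

/-- The packing dimension. -/
noncomputable def packingDim {X : Type*} [MetricSpace X] (A : Set X) : ℝ :=
  sInf {α : ℝ | 0 ≤ α ∧ packingMeasure α A = 0}

/-- The Assouad dimension. -/
noncomputable def assouadDim {X : Type*} [MetricSpace X] (A : Set X) : ℝ :=
  sInf {α : ℝ | 0 ≤ α ∧ ∃ c ρ : ℝ, 0 < c ∧ 0 < ρ ∧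
    ∀ r R : ℝ, 0 < r → r < R → R ≤ ρ → ∀ x ∈ A,
      (coverNumber r (Metric.ball x R ∩ A) : ℝ) ≤ c * (R / r) ^ α}

/-- The bijection between finite binary words and positive integers:
`f(ε) = 1` and `f(w_1 ⋯ w_n) = 2^n + Σ_{i=1}^n w_i 2^{n-i}`. -/
def findex : List Bool → ℕ
  | [] => 1
  | v :: w => findex w + (if v then 2 else 1) * 2 ^ w.length

/-- The length of the interval `V_w`, computed on the *reversed* word (last letter
first), so that the parent of `v :: w` is `w`.  If there exists `m < n` with
`n = a_{f(w_1 ⋯ w_m)}` then the length is `α^{-b_{f(w_1⋯w_m)}}` where `α = 2^{1/γ}`;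
otherwise it is `α⁻¹` times the length of the parent interval. -/
noncomputable def Vlen' (γ : ℝ) (a b : ℕ → ℕ) : List Bool → ℝ
  | [] => 1
  | v :: w =>
    if h : ∃ m, m < w.length + 1 ∧ w.length + 1 = a (findex (((v :: w).reverse).take m)) then
      (((2:ℝ) ^ ((1:ℝ)/γ)) ^ (b (findex (((v :: w).reverse).take (Nat.find h)))))⁻¹
    else
      ((2:ℝ) ^ ((1:ℝ)/γ))⁻¹ * Vlen' γ a b w

/-- The left endpoint of `V_w`, computed on the reversed word: a child is placed at the
extreme left of its parent if its last letter is `0`, at the extreme right if it is `1`. -/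
noncomputable def Vleft' (γ : ℝ) (a b : ℕ → ℕ) : List Bool → ℝ
  | [] => 0
  | v :: w =>
    if v then Vleft' γ a b w + Vlen' γ a b w - Vlen' γ a b (v :: w)
    else Vleft' γ a b w

/-- The closed interval `V_w` (for the word `w` in usual order). -/
noncomputable def Vset (γ : ℝ) (a b : ℕ → ℕ) (w : List Bool) : Set ℝ :=
  Set.Icc (Vleft' γ a b w.reverse) (Vleft' γ a b w.reverse + Vlen' γ a b w.reverse)

/-- `F_m(γ,a,b)`: union of the `V_w` over binary words of length `m`. -/
noncomputable def FsetN (γ : ℝ) (a b : ℕ → ℕ) (m : ℕ) : Set ℝ :=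
  ⋃ w ∈ {w : List Bool | w.length = m}, Vset γ a b w

/-- The set `F(γ,a,b) = ⋂_m F_m(γ,a,b)`. -/
noncomputable def Fset (γ : ℝ) (a b : ℕ → ℕ) : Set ℝ :=
  ⋂ m, FsetN γ a b m


private lemma findex_ge (w : List Bool) : w.length + 1 ≤ findex w := by
  induction w with
  | nil => simp [findex]
  | cons v w ih =>
    have h2 : 1 ≤ 2 ^ w.length := Nat.one_le_two_pow
    have h3 : 1 ≤ (if v then 2 else 1) * 2 ^ w.length := by
      cases v <;> simp <;> omega
    simp only [findex, List.length_cons]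
    omega

private lemma findex_lt (w : List Bool) : findex w < 2 ^ (w.length + 1) := by
  induction w with
  | nil => simp [findex]
  | cons v w ih =>
    have h3 : (if v then 2 else 1) * 2 ^ w.length ≤ 2 * 2 ^ w.length := by
      cases v <;> simp
    simp only [findex, List.length_cons]
    have e1 : 2 ^ (w.length + 1) = 2 * 2 ^ w.length := by ring
    have e2 : 2 ^ (w.length + 1 + 1) = 2 * 2 * 2 ^ w.length := by ring
    omega

/-- Exponent of the length of `V_w` (the length is `α ^ (-clen w)`), on reversed words. -/
private def clen (a b : ℕ → ℕ) : List Bool → ℕ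
  | [] => 0
  | v :: w =>
    if h : ∃ m, m < w.length + 1 ∧ w.length + 1 = a (findex (((v :: w).reverse).take m)) then
      b (findex (((v :: w).reverse).take (Nat.find h)))
    else clen a b w + 1

private lemma vlen_eq (γ : ℝ) (a b : ℕ → ℕ) (w : List Bool) :
    Vlen' γ a b w = (((2:ℝ) ^ ((1:ℝ)/γ)) ^ (clen a b w))⁻¹ := by
  induction w with
  | nil => simp [Vlen', clen]
  | cons v w ih =>
    rw [Vlen', clen]
    by_cases h : ∃ m, m < w.length + 1 ∧ w.length + 1 = a (findex (((v :: w).reverse).take m))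
    · rw [dif_pos h, dif_pos h]
    · rw [dif_neg h, dif_neg h, ih, pow_succ, mul_inv]
      ring

private lemma clen_spec (a b : ℕ → ℕ) (ha0 : a 0 = 1) (hb0 : b 0 = 1) (w : List Bool) :
    ∃ g, a g ≤ w.length + 1 ∧ clen a b w + a g = b g + w.length := by
  induction w with
  | nil => exact ⟨0, by simp [ha0], by simp [clen, ha0, hb0]⟩
  | cons v w ih =>
    rw [clen]
    by_cases h : ∃ m, m < w.length + 1 ∧ w.length + 1 = a (findex (((v :: w).reverse).take m))
    · rw [dif_pos h]
      have hs := (Nat.find_spec h).2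
      refine ⟨findex ((v :: w).reverse.take (Nat.find h)), ?_, ?_⟩ <;>
        simp only [List.length_cons] <;> omega
    · rw [dif_neg h]
      obtain ⟨g, hg1, hg2⟩ := ih
      exact ⟨g, by simp only [List.length_cons]; omega, by simp only [List.length_cons]; omega⟩

private lemma clen_cons (a b : ℕ → ℕ) (ha : StrictMono a) (hb : StrictMono b)
    (ha0 : a 0 = 1) (hb0 : b 0 = 1)
    (hab : ∀ i j, i ≤ j → a j - a i ≤ b j - b i) (v : Bool) (w : List Bool) :
    clen a b w + 1 ≤ clen a b (v :: w) := by
  obtain ⟨g, hg1, hg2⟩ := clen_spec a b ha0 hb0 w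
  rw [clen]
  by_cases h : ∃ m, m < w.length + 1 ∧ w.length + 1 = a (findex (((v :: w).reverse).take m))
  · rw [dif_pos h]
    set f := findex ((v :: w).reverse.take (Nat.find h)) with hf
    have hfa : w.length + 1 = a f := (Nat.find_spec h).2
    have hgf : g ≤ f := ha.le_iff_le.mp (by omega)
    have h1 := hab g f hgf
    have h2 : a g ≤ a f := ha.monotone hgf
    have h3 : b g ≤ b f := hb.monotone hgf
    omega
  · rw [dif_neg h]

private lemma alpha_ge_two (γ : ℝ) (hγ : 0 < γ) (hγ1 : γ ≤ 1) : 2 ≤ (2:ℝ) ^ ((1:ℝ)/γ) := by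
  nth_rewrite 1 [show (2:ℝ) = 2 ^ (1:ℝ) by rw [Real.rpow_one]]
  exact Real.rpow_le_rpow_of_exponent_le one_le_two (by rw [le_div_iff₀ hγ]; linarith)

private lemma alpha_pos (γ : ℝ) : 0 < (2:ℝ) ^ ((1:ℝ)/γ) := Real.rpow_pos_of_pos two_pos _

private lemma vlen_pos (γ : ℝ) (a b : ℕ → ℕ) (w : List Bool) : 0 < Vlen' γ a b w := by
  rw [vlen_eq]; exact inv_pos.mpr (pow_pos (alpha_pos γ) _)

private lemma vlen_cons_le (γ : ℝ) (hγ : 0 < γ) (hγ1 : γ ≤ 1) (a b : ℕ → ℕ)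
    (ha : StrictMono a) (hb : StrictMono b) (ha0 : a 0 = 1) (hb0 : b 0 = 1)
    (hab : ∀ i j, i ≤ j → a j - a i ≤ b j - b i) (v : Bool) (w : List Bool) :
    Vlen' γ a b (v :: w) ≤ Vlen' γ a b w := by
  rw [vlen_eq, vlen_eq]
  have h1 : (1:ℝ) ≤ (2:ℝ) ^ ((1:ℝ)/γ) := le_trans one_le_two (alpha_ge_two γ hγ hγ1)
  refine inv_anti₀ (pow_pos (alpha_pos γ) _) ?_
  exact pow_le_pow_right₀ h1 (le_trans (Nat.le_succ _) (clen_cons a b ha hb ha0 hb0 hab v w))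

private lemma Icc_cons_subset (γ : ℝ) (hγ : 0 < γ) (hγ1 : γ ≤ 1) (a b : ℕ → ℕ)
    (ha : StrictMono a) (hb : StrictMono b) (ha0 : a 0 = 1) (hb0 : b 0 = 1)
    (hab : ∀ i j, i ≤ j → a j - a i ≤ b j - b i) (v : Bool) (w : List Bool) :
    Set.Icc (Vleft' γ a b (v :: w)) (Vleft' γ a b (v :: w) + Vlen' γ a b (v :: w)) ⊆
      Set.Icc (Vleft' γ a b w) (Vleft' γ a b w + Vlen' γ a b w) := by
  have h1 := vlen_cons_le γ hγ hγ1 a b ha hb ha0 hb0 hab v w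
  have h2 := vlen_pos γ a b (v :: w)
  cases v
  · rw [show Vleft' γ a b (false :: w) = Vleft' γ a b w by rw [Vleft']; simp]
    exact Set.Icc_subset_Icc le_rfl (by linarith)
  · rw [show Vleft' γ a b (true :: w)
        = Vleft' γ a b w + Vlen' γ a b w - Vlen' γ a b (true :: w) by rw [Vleft']; simp]
    exact Set.Icc_subset_Icc (by linarith) (by linarith)

private lemma Icc_append_subset (γ : ℝ) (hγ : 0 < γ) (hγ1 : γ ≤ 1) (a b : ℕ → ℕ)
    (ha : StrictMono a) (hb : StrictMono b) (ha0 : a 0 = 1) (hb0 : b 0 = 1)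
    (hab : ∀ i j, i ≤ j → a j - a i ≤ b j - b i) (s w : List Bool) :
    Set.Icc (Vleft' γ a b (s ++ w)) (Vleft' γ a b (s ++ w) + Vlen' γ a b (s ++ w)) ⊆
      Set.Icc (Vleft' γ a b w) (Vleft' γ a b w + Vlen' γ a b w) := by
  induction s with
  | nil => simp
  | cons v s ih =>
    exact le_trans (Icc_cons_subset γ hγ hγ1 a b ha hb ha0 hb0 hab v (s ++ w)) ih

private lemma Vset_take (γ : ℝ) (hγ : 0 < γ) (hγ1 : γ ≤ 1) (a b : ℕ → ℕ)
    (ha : StrictMono a) (hb : StrictMono b) (ha0 : a 0 = 1) (hb0 : b 0 = 1)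
    (hab : ∀ i j, i ≤ j → a j - a i ≤ b j - b i) (w : List Bool) (k : ℕ) :
    Vset γ a b w ⊆ Vset γ a b (w.take k) := by
  have hrev : w.reverse = (w.drop k).reverse ++ (w.take k).reverse := by
    rw [← List.reverse_append, List.take_append_drop]
  unfold Vset
  rw [hrev]
  exact Icc_append_subset γ hγ hγ1 a b ha hb ha0 hb0 hab _ _

private lemma clen_reset (a b : ℕ → ℕ) (hainj : Function.Injective a)
    (w : List Bool) (m : ℕ) (hm : m < w.length) (hfm : w.length = a (findex (w.take m))) :
    clen a b w.reverse = b (findex (w.take m)) := by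
  have hw : w ≠ [] := by intro h; subst h; simp at hm
  obtain ⟨v, t, hvt⟩ : ∃ v t, w.reverse = v :: t := by
    cases hr : w.reverse with
    | nil => exact absurd (List.reverse_eq_nil_iff.mp hr) hw
    | cons v t => exact ⟨v, t, rfl⟩
  have hw2 : (v :: t).reverse = w := by rw [← hvt, List.reverse_reverse]
  have hlen : t.length + 1 = w.length := by
    have := congrArg List.length hvt
    simp only [List.length_reverse, List.length_cons] at this
    omega
  rw [hvt, clen]
  have hC : ∃ m', m' < t.length + 1 ∧ t.length + 1 = a (findex (((v :: t).reverse).take m')) := by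
    rw [hw2, hlen]; exact ⟨m, hm, hfm⟩
  rw [dif_pos hC]
  have hspec := (Nat.find_spec hC).2
  have key : a (findex (((v :: t).reverse).take (Nat.find hC))) = a (findex (w.take m)) := by
    rw [← hspec, hlen, hfm]
  exact congrArg b (hainj key)

private lemma vlen_reset (γ : ℝ) (a b : ℕ → ℕ) (hainj : Function.Injective a)
    (w : List Bool) (m : ℕ) (hm : m < w.length) (hfm : w.length = a (findex (w.take m))) :
    Vlen' γ a b w.reverse = (((2:ℝ) ^ ((1:ℝ)/γ)) ^ (b (findex (w.take m))))⁻¹ := by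
  rw [vlen_eq, clen_reset a b hainj w m hm hfm]

private lemma diam_C (γ : ℝ) (a b : ℕ → ℕ) (ha : StrictMono a) (m : ℕ)
    (u : Fin m → Bool) (tl : Fin (a (findex (List.ofFn u)) - m) → Bool) :
    Metric.ediam (Vset γ a b (List.ofFn u ++ List.ofFn tl))
      = ENNReal.ofReal ((((2:ℝ) ^ ((1:ℝ)/γ)) ^ (b (findex (List.ofFn u))))⁻¹) := by
  have hfm : m + 1 ≤ findex (List.ofFn u) := by
    have := findex_ge (List.ofFn u); simpa using this
  have hmaf : m < a (findex (List.ofFn u)) :=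
    lt_of_lt_of_le (Nat.lt_of_succ_le hfm) ha.le_apply
  set w := List.ofFn u ++ List.ofFn tl with hwdef
  have hwlen : w.length = a (findex (List.ofFn u)) := by
    simp only [hwdef, List.length_append, List.length_ofFn]
    omega
  have hwtake : w.take m = List.ofFn u := by
    have := List.take_left (l₁ := List.ofFn u) (l₂ := List.ofFn tl)
    rwa [List.length_ofFn] at this
  have hvlen : Vlen' γ a b w.reverse
      = (((2:ℝ) ^ ((1:ℝ)/γ)) ^ (b (findex (List.ofFn u))))⁻¹ := by
    have := vlen_reset γ a b ha.injective w m (by omega) (by rw [hwtake, hwlen])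
    rwa [hwtake] at this
  rw [Vset, Real.ediam_Icc, add_sub_cancel_left, hvlen]

private lemma ofReal_alpha_le (γ : ℝ) (hγ : 0 < γ) (hγ1 : γ ≤ 1) (k : ℕ) :
    ENNReal.ofReal ((((2:ℝ) ^ ((1:ℝ)/γ)) ^ k)⁻¹) ≤ (2:ℝ≥0∞)⁻¹ ^ k := by
  have h1 : (((2:ℝ) ^ ((1:ℝ)/γ)) ^ k)⁻¹ ≤ ((2:ℝ) ^ k)⁻¹ :=
    inv_anti₀ (pow_pos two_pos k)
      (pow_le_pow_left₀ (by norm_num) (alpha_ge_two γ hγ hγ1) k)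
  refine le_trans (ENNReal.ofReal_le_ofReal h1) ?_
  rw [ENNReal.ofReal_inv_of_pos (pow_pos two_pos k), ENNReal.ofReal_pow (by norm_num),
    ENNReal.ofReal_ofNat, ← ENNReal.inv_pow]

private lemma two_pow_mul_inv (j k : ℕ) (h : j ≤ k) :
    (2:ℝ≥0∞) ^ j * (2:ℝ≥0∞)⁻¹ ^ k = (2:ℝ≥0∞)⁻¹ ^ (k - j) := by
  have hk : (2:ℝ≥0∞)⁻¹ ^ k = 2⁻¹ ^ j * 2⁻¹ ^ (k - j) := by rw [← pow_add]; congr 1; omega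
  rw [hk, ← mul_assoc, ← mul_pow, ENNReal.mul_inv_cancel two_ne_zero ENNReal.ofNat_ne_top,
    one_pow, one_mul]

private lemma cover_lemma (γ : ℝ) (hγ : 0 < γ) (hγ1 : γ ≤ 1) (a b : ℕ → ℕ)
    (ha : StrictMono a) (hb : StrictMono b) (ha0 : a 0 = 1) (hb0 : b 0 = 1)
    (hab : ∀ i j, i ≤ j → a j - a i ≤ b j - b i) (m : ℕ) :
    Fset γ a b ⊆ ⋃ p : (Σ u : Fin m → Bool, (Fin (a (findex (List.ofFn u)) - m) → Bool)),
      Vset γ a b (List.ofFn p.1 ++ List.ofFn p.2) := by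
  intro x hx
  set M := a (2 ^ (m + 1)) with hM
  have hxM : x ∈ FsetN γ a b M := Set.mem_iInter.mp hx M
  obtain ⟨W, hWlen, hxW⟩ : ∃ W : List Bool, W.length = M ∧ x ∈ Vset γ a b W := by
    simpa [FsetN] using hxM
  have hmM : m ≤ M := by
    have h1 : m < 2 ^ (m+1) := lt_of_lt_of_le (Nat.lt_two_pow_self (n := m))
      (Nat.pow_le_pow_right (by norm_num) (Nat.le_succ m))
    exact le_trans (le_of_lt h1) ha.le_apply
  set u : Fin m → Bool := fun i => W.getD i false with hu
  have hofn : List.ofFn u = W.take m := by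
    apply List.ext_getElem
    · simp [hWlen]; omega
    · intro i h1 h2
      have h1' : i < m := by simpa using h1
      rw [List.getElem_ofFn, List.getElem_take]
      simp only [hu]
      exact List.getD_eq_getElem W false (by omega)
  set f := findex (List.ofFn u) with hf
  have hfle : f ≤ 2 ^ (m + 1) := by
    have := findex_lt (List.ofFn u)
    rw [List.length_ofFn] at this
    omega
  have hafM : a f ≤ M := ha.monotone hfle
  have hfge : m + 1 ≤ f := by
    have := findex_ge (List.ofFn u); rwa [List.length_ofFn] at this
  have hmaf : m < a f := lt_of_lt_of_le (Nat.lt_of_succ_le hfge) ha.le_apply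
  set tl : Fin (a f - m) → Bool := fun j => W.getD (m + j) false with htl
  have hWtake : W.take (a f) = List.ofFn u ++ List.ofFn tl := by
    apply List.ext_getElem
    · simp [hWlen]; omega
    · intro i h1 h2
      have h1' : i < a f := by
        simp only [List.length_take] at h1; omega
      rw [List.getElem_take]
      rcases lt_or_ge i m with him | him
      · rw [List.getElem_append_left (by simpa [List.length_ofFn] using him)]
        rw [List.getElem_ofFn]
        simp only [hu]
        exact (List.getD_eq_getElem W false (by omega)).symm
      · rw [List.getElem_append_right (by simpa [List.length_ofFn] using him)]
        rw [List.getElem_ofFn]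
        simp only [htl, List.length_ofFn]
        have hmi : m + (i - m) = i := by omega
        rw [hmi]
        exact (List.getD_eq_getElem W false (by omega)).symm
  refine Set.mem_iUnion.mpr ⟨⟨u, tl⟩, ?_⟩
  have hsub := Vset_take γ hγ hγ1 a b ha hb ha0 hb0 hab W (a f)
  rw [hWtake] at hsub
  exact hsub hxW

private lemma hmeas_zero (γ : ℝ) (hγ : 0 < γ) (hγ1 : γ ≤ 1) (a b : ℕ → ℕ)
    (ha : StrictMono a) (hb : StrictMono b) (hbpos : ∀ i, 0 < b i)
    (ha0 : a 0 = 1) (hb0 : b 0 = 1)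
    (hab : ∀ i j, i ≤ j → a j - a i ≤ b j - b i)
    (har : Filter.Tendsto (fun i => (a i : ℝ) / (b i : ℝ)) Filter.atTop (nhds 0))
    (d : ℝ) (hd : 0 < d) : μH[d] (Fset γ a b) = 0 := by
  obtain ⟨N, hN⟩ : ∃ N, ∀ f, N ≤ f → 2 * (a f : ℝ) ≤ d * b f := by
    have h2 : ∀ᶠ i in Filter.atTop, (a i : ℝ) / b i < d / 2 :=
      har.eventually (gt_mem_nhds (by positivity))
    obtain ⟨N, hN⟩ := Filter.eventually_atTop.mp h2
    refine ⟨N, fun f hf => ?_⟩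
    have hbf : (0:ℝ) < b f := by exact_mod_cast hbpos f
    have h3 := hN f hf
    rw [div_lt_iff₀ hbf] at h3
    nlinarith
  have hr : Filter.Tendsto (fun m : ℕ => (2:ℝ≥0∞)⁻¹ ^ (m+1)) Filter.atTop (nhds 0) := by
    have h0 := ENNReal.tendsto_pow_atTop_nhds_zero_of_lt_one
      (show (2:ℝ≥0∞)⁻¹ < 1 by norm_num)
    exact h0.comp (Filter.tendsto_add_atTop_nat 1)
  have key := MeasureTheory.Measure.hausdorffMeasure_le_liminf_sum
    (ι := fun m : ℕ => Σ u : Fin m → Bool, (Fin (a (findex (List.ofFn u)) - m) → Bool))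
    d (Fset γ a b)
    (fun m : ℕ => (2:ℝ≥0∞)⁻¹ ^ (m+1)) hr
    (fun m p => Vset γ a b (List.ofFn p.1 ++ List.ofFn p.2))
    ?_ ?_
  · refine le_antisymm (key.trans ?_) zero_le
    have hs : ∀ m, N ≤ m →
        (∑ p : (Σ u : Fin m → Bool, (Fin (a (findex (List.ofFn u)) - m) → Bool)),
          Metric.ediam (Vset γ a b (List.ofFn p.1 ++ List.ofFn p.2)) ^ d)
          ≤ (2:ℝ≥0∞)⁻¹ ^ m := by
      intro m hm
      rw [← Finset.univ_sigma_univ, Finset.sum_sigma]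
      have hterm : ∀ u : Fin m → Bool,
          ∀ tl : Fin (a (findex (List.ofFn u)) - m) → Bool,
          Metric.ediam (Vset γ a b (List.ofFn u ++ List.ofFn tl)) ^ d
            ≤ (2:ℝ≥0∞)⁻¹ ^ (2 * a (findex (List.ofFn u))) := by
        intro u tl
        rw [diam_C γ a b ha m u tl]
        set f := findex (List.ofFn u) with hf
        have hfge : m + 1 ≤ f := by
          have := findex_ge (List.ofFn u); rwa [List.length_ofFn] at this
        have hfN : N ≤ f := by omega
        calc ENNReal.ofReal ((((2:ℝ) ^ ((1:ℝ)/γ)) ^ (b f))⁻¹) ^ d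
            ≤ ((2:ℝ≥0∞)⁻¹ ^ (b f)) ^ d :=
              ENNReal.rpow_le_rpow (ofReal_alpha_le γ hγ hγ1 (b f)) hd.le
          _ = (2:ℝ≥0∞)⁻¹ ^ ((b f : ℝ) * d) := by
              rw [← ENNReal.rpow_natCast _ (b f), ← ENNReal.rpow_mul]
          _ ≤ (2:ℝ≥0∞)⁻¹ ^ (((2 * a f : ℕ) : ℝ)) := by
              refine ENNReal.rpow_le_rpow_of_exponent_ge (by norm_num) ?_
              push_cast
              have := hN f hfN
              nlinarith
          _ = (2:ℝ≥0∞)⁻¹ ^ (2 * a f) := ENNReal.rpow_natCast _ _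
      calc ∑ u : Fin m → Bool, ∑ tl : Fin (a (findex (List.ofFn u)) - m) → Bool,
              Metric.ediam (Vset γ a b (List.ofFn u ++ List.ofFn tl)) ^ d
          ≤ ∑ u : Fin m → Bool, ∑ _tl : Fin (a (findex (List.ofFn u)) - m) → Bool,
              (2:ℝ≥0∞)⁻¹ ^ (2 * a (findex (List.ofFn u))) :=
            Finset.sum_le_sum fun u _ => Finset.sum_le_sum fun tl _ => hterm u tl
        _ ≤ ∑ _u : Fin m → Bool, (2:ℝ≥0∞)⁻¹ ^ (2 * m) := by
            refine Finset.sum_le_sum fun u _ => ?_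
            set f := findex (List.ofFn u) with hf
            have hfge : m + 1 ≤ f := by
              have := findex_ge (List.ofFn u); rwa [List.length_ofFn] at this
            have hmaf : m < a f := lt_of_lt_of_le (Nat.lt_of_succ_le hfge) ha.le_apply
            rw [Finset.sum_const]
            have hcard : (Finset.univ : Finset (Fin (a f - m) → Bool)).card
                = 2 ^ (a f - m) := by simp
            rw [hcard, nsmul_eq_mul]
            push_cast
            rw [two_pow_mul_inv (a f - m) (2 * a f) (by omega)]
            have he : 2 * a f - (a f - m) = a f + m := by omega
            rw [he]
            exact pow_le_pow_of_le_one zero_le (by norm_num) (by omega)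
        _ = 2 ^ m * (2:ℝ≥0∞)⁻¹ ^ (2 * m) := by
            rw [Finset.sum_const]
            have hcard : (Finset.univ : Finset (Fin m → Bool)).card = 2 ^ m := by simp
            rw [hcard, nsmul_eq_mul]
            push_cast
            ring
        _ = (2:ℝ≥0∞)⁻¹ ^ m := by
            rw [two_pow_mul_inv m (2 * m) (by omega)]
            congr 1
            omega
    have hlim : Filter.liminf (fun m : ℕ =>
        (∑ p : (Σ u : Fin m → Bool, (Fin (a (findex (List.ofFn u)) - m) → Bool)),
          Metric.ediam (Vset γ a b (List.ofFn p.1 ++ List.ofFn p.2)) ^ d)) Filter.atTop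
        ≤ Filter.liminf (fun m : ℕ => (2:ℝ≥0∞)⁻¹ ^ m) Filter.atTop :=
      Filter.liminf_le_liminf (Filter.eventually_atTop.mpr ⟨N, hs⟩)
    rwa [(ENNReal.tendsto_pow_atTop_nhds_zero_of_lt_one
      (show (2:ℝ≥0∞)⁻¹ < 1 by norm_num)).liminf_eq] at hlim
  · refine Filter.Eventually.of_forall fun m => ?_
    intro p
    rw [diam_C γ a b ha m p.1 p.2]
    set f := findex (List.ofFn p.1) with hf
    have hfge : m + 1 ≤ f := by
      have := findex_ge (List.ofFn p.1); rwa [List.length_ofFn] at this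
    have hbf : m + 1 ≤ b f := le_trans hfge (le_trans hb.le_apply le_rfl)
    refine le_trans (ofReal_alpha_le γ hγ hγ1 (b f)) ?_
    exact pow_le_pow_of_le_one zero_le (by norm_num) hbf
  · exact Filter.Eventually.of_forall fun m =>
      cover_lemma γ hγ hγ1 a b ha hb ha0 hb0 hab m

/-- `dim_H F(γ,a,b) = 0`. -/
theorem statement17 (γ : ℝ) (hγ : 0 < γ) (hγ1 : γ ≤ 1)
    (a b : ℕ → ℕ) (ha : StrictMono a) (hb : StrictMono b)
    (hapos : ∀ i, 0 < a i) (hbpos : ∀ i, 0 < b i)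
    (ha0 : a 0 = 1) (hb0 : b 0 = 1)
    (hab : ∀ i j, i ≤ j → a j - a i ≤ b j - b i)
    (har : Filter.Tendsto (fun i => (a i : ℝ) / (b i : ℝ)) Filter.atTop (nhds 0))
    (hbr : Filter.Tendsto (fun i => (b i : ℝ) / (a (i+1) : ℝ)) Filter.atTop (nhds 0)) :
    dimH (Fset γ a b) = 0 := by
  refine le_antisymm (dimH_le fun d' hd' => ?_) zero_le
  rcases eq_or_lt_of_le (show (0:NNReal) ≤ d' from zero_le) with h0 | h0
  · simp [← h0]
  · exfalso
    have hz := hmeas_zero γ hγ hγ1 a b ha hb hbpos ha0 hb0 hab har (d' : ℝ)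
      (by exact_mod_cast h0)
    rw [hz] at hd'
    exact ENNReal.zero_ne_top hd'


end
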